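/- A polymatroid f on {s}∪P realizes the access structure A if and only if the tightening f↓i at any participant i ∈ P realizes A. Consequently f realizes A iff its full tightening f↓ (at all participants) realizes A. -/
import Mathlib


/-- The polymatroid rank function `f` on ground set `{s} ∪ P` realizes the access
structure `𝒜 ⊆ 2^P`. -/
def Realizes {α : Type*} [DecidableEq α] (s : α) (P : Finset α) (𝒜 : Set (Finset α))
    (f : Finset α → ℝ) : Prop :=
  ∀ A : Finset α, A ⊆ P →
    (A ∈ 𝒜 ↔ f (insert s A) = f A) ∧ (A ∉ 𝒜 ↔ f (insert s A) = f A + f {s})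

/-- Realizing an access structure is invariant under tightening at a participant,
and under the full tightening at all participants. -/
theorem realizes_iff_tightening_realizes {α : Type*} [DecidableEq α] (s : α) (P : Finset α)
    (hs : s ∉ P) (𝒜 : Set (Finset α)) (f : Finset α → ℝ)
    (hempty : f ∅ = 0)
    (hnonneg : ∀ A, A ⊆ insert s P → 0 ≤ f A)
    (hmono : ∀ A B : Finset α, A ⊆ B → B ⊆ insert s P → f A ≤ f B)
    (hsub : ∀ A B : Finset α, A ⊆ insert s P → B ⊆ insert s P →
        f (A ∪ B) + f (A ∩ B) ≤ f A + f B)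
    (i : α) (hi : i ∈ P)
    (g gall : Finset α → ℝ)
    (hg : ∀ A : Finset α, g A =
      if i ∈ A then f A - (f (insert s P) - f (insert s P \ {i})) else f A)
    (hgall : ∀ A : Finset α, gall A =
      f A - ∑ j ∈ A ∩ P, (f (insert s P) - f (insert s P \ {j}))) :
    (Realizes s P 𝒜 f ↔ Realizes s P 𝒜 g) ∧
    (Realizes s P 𝒜 f ↔ Realizes s P 𝒜 gall) := by
  have his : i ≠ s := fun h => hs (h ▸ hi)
  have key : ∀ h : Finset α → ℝ,
      (∀ A : Finset α, A ⊆ P → h (insert s A) - h A = f (insert s A) - f A) →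
      h {s} = f {s} →
      (Realizes s P 𝒜 f ↔ Realizes s P 𝒜 h) := by
    intro h hdiff hs1
    unfold Realizes
    refine forall_congr' fun A => imp_congr_right fun hA => ?_
    have hd := hdiff A hA
    have e1 : (h (insert s A) = h A) ↔ (f (insert s A) = f A) := by
      rw [← sub_eq_zero, hd, sub_eq_zero]
    have e2 : (h (insert s A) = h A + h {s}) ↔ (f (insert s A) = f A + f {s}) := by
      constructor <;> intro h2 <;> linarith
    rw [e1, e2]
  constructor
  · refine key g ?_ ?_
    · intro A hA
      rw [hg, hg]
      by_cases hiA : i ∈ A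
      · simp only [Finset.mem_insert, hiA, or_true, if_true]
        ring
      · simp only [Finset.mem_insert, hiA, his, or_false, if_false]
    · rw [hg]
      simp [his]
  · refine key gall ?_ ?_
    · intro A hA
      rw [hgall, hgall, Finset.insert_inter_of_notMem hs]
      ring
    · rw [hgall, Finset.singleton_inter_of_notMem hs]
      simp
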